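/- arXiv:1410.3805 — 2 statements merged into one kernel-verified Lean document; each statement's English description precedes it below -/
import Mathlib

section
/- For r ∈ (0,1), the density h_r(x) = (-r/ln(1-r)) · 1/(1-r+rx) is a fixed point of the Perron–Frobenius operator of T_r: for all x ∈ [0,1], f_{r,0}'(x)·h_r(f_{r,0}(x)) + |f_{r,1}'(x)|·h_r(f_{r,1}(x)) = h_r(x). -/
/-- Left inverse branch of the interpolating map `T r`. -/
noncomputable def f0 (r x : ℝ) : ℝ := x / (2 - r + r * x)

/-- Right inverse branch of the interpolating map `T r`. -/
noncomputable def f1 (r x : ℝ) : ℝ := (1 + (1 - r) * (1 - x)) / (2 - r + r * x)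

/-- The invariant density of `T r` for `r ∈ (0,1)`. -/
noncomputable def h (r x : ℝ) : ℝ := (-r / Real.log (1 - r)) * (1 / (1 - r + r * x))

theorem stmt_3 (r : ℝ) (hr : r ∈ Set.Ioo (0:ℝ) 1) (x : ℝ) (hx : x ∈ Set.Icc (0:ℝ) 1) :
    deriv (f0 r) x * h r (f0 r x) + |deriv (f1 r) x| * h r (f1 r x) = h r x := by
  obtain ⟨hr0, hr1⟩ := hr
  obtain ⟨hx0, hx1⟩ := hx
  have hrx : 0 ≤ r * x := mul_nonneg hr0.le hx0
  have hD : (0:ℝ) < 2 - r + r * x := by linarith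
  have hE : (0:ℝ) < 1 - r + r * x := by linarith
  have hden : HasDerivAt (fun y : ℝ => 2 - r + r * y) r x := by
    simpa using ((hasDerivAt_id x).const_mul r).const_add (2 - r)
  have h0 : HasDerivAt (f0 r) ((2 - r) / (2 - r + r * x) ^ 2) x := by
    have : HasDerivAt (fun y : ℝ => id y / (2 - r + r * y))
        ((1 * (2 - r + r * x) - id x * r) / (2 - r + r * x) ^ 2) x :=
      (hasDerivAt_id x).div hden hD.ne'
    convert this using 1
    · rfl
    simp only [id]
    ring
  have h1 : HasDerivAt (f1 r) (-(2 - r) / (2 - r + r * x) ^ 2) x := by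
    have hnum : HasDerivAt (fun y : ℝ => 1 + (1 - r) * (1 - y)) (-(1 - r)) x := by
      have : HasDerivAt (fun y : ℝ => 1 - y) (-1) x := by
        simpa using (hasDerivAt_id x).const_sub 1
      simpa using (this.const_mul (1 - r)).const_add 1
    have : HasDerivAt (fun y : ℝ => (1 + (1 - r) * (1 - y)) / (2 - r + r * y))
        ((-(1 - r) * (2 - r + r * x) - (1 + (1 - r) * (1 - x)) * r) / (2 - r + r * x) ^ 2) x :=
      hnum.div hden hD.ne'
    convert this using 1
    · rfl
    ring
  rw [h0.deriv, h1.deriv]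
  have habs : |(-(2 - r) / (2 - r + r * x) ^ 2)| = (2 - r) / (2 - r + r * x) ^ 2 := by
    rw [abs_div, abs_neg, abs_of_pos (by linarith : (0:ℝ) < 2 - r),
      abs_of_pos (pow_pos hD 2)]
  rw [habs]
  have hf0E : 1 - r + r * f0 r x = (2 - r) * (1 - r + r * x) / (2 - r + r * x) := by
    unfold f0; field_simp; ring
  have hf1E : 1 - r + r * f1 r x = (2 - r) / (2 - r + r * x) := by
    unfold f1; field_simp; ring
  unfold h
  rw [hf0E, hf1E]
  have h2r : (0:ℝ) < 2 - r := by linarith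
  have key : (2 - r) / (2 - r + r * x) ^ 2 * (1 / ((2 - r) * (1 - r + r * x) / (2 - r + r * x)))
      + (2 - r) / (2 - r + r * x) ^ 2 * (1 / ((2 - r) / (2 - r + r * x)))
      = 1 / (1 - r + r * x) := by
    field_simp
    ring
  linear_combination (-r / Real.log (1 - r)) * key
end

section
/- Adjacency of cylinders determines symbolic closeness: for every r ∈ [0,1], n ∈ ℕ, and distinct words ω, ν ∈ {0,1}^n, if the cylinder sets [ω]_r = f_{r,ω}([0,1]) and [ν]_r = f_{r,ν}([0,1]) have nonempty intersection, then there exists a unique index i ∈ {1,…,n} with ω_i ≠ ν_i, and ω_j = ν_j for all j ≠ i. -/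
/-- The inverse branch labelled by a bit: `false ↦ f0`, `true ↦ f1`. -/
noncomputable def branch (r : ℝ) (b : Bool) : ℝ → ℝ := if b then f1 r else f0 r

/-- For a word `φ = (φ₁, …, φₙ)`, `fword r φ = f_{r,φ₁} ∘ ⋯ ∘ f_{r,φₙ}`. -/
noncomputable def fword (r : ℝ) : List Bool → ℝ → ℝ
  | [] => id
  | b :: l => branch r b ∘ fword r l

/-- The cylinder set `[φ]_r = f_{r,φ}([0,1])`. -/
noncomputable def cylinder (r : ℝ) (φ : List Bool) : Set ℝ := fword r φ '' Set.Icc 0 1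

section lems
variable {r x y : ℝ}

lemma denom_pos (hr0 : 0 ≤ r) (hr1 : r ≤ 1) (hx : 0 ≤ x) : 0 < 2 - r + r * x := by
  nlinarith [mul_nonneg hr0 hx]

lemma f0_mem (hr0 : 0 ≤ r) (hr1 : r ≤ 1) (hx : x ∈ Set.Icc (0:ℝ) 1) :
    f0 r x ∈ Set.Icc (0:ℝ) (1/2) := by
  obtain ⟨h0, h1⟩ := hx
  have hd := denom_pos hr0 hr1 h0
  constructor
  · exact div_nonneg h0 hd.le
  · rw [f0, div_le_iff₀ hd]; nlinarith

lemma f1_mem (hr0 : 0 ≤ r) (hr1 : r ≤ 1) (hx : x ∈ Set.Icc (0:ℝ) 1) :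
    f1 r x ∈ Set.Icc (1/2:ℝ) 1 := by
  obtain ⟨h0, h1⟩ := hx
  have hd := denom_pos hr0 hr1 h0
  constructor
  · rw [f1, le_div_iff₀ hd]; nlinarith
  · rw [f1, div_le_one hd]; nlinarith

lemma f0_eq_half (hr0 : 0 ≤ r) (hr1 : r ≤ 1) (hx : x ∈ Set.Icc (0:ℝ) 1)
    (h : f0 r x = 1/2) : x = 1 := by
  have hd := denom_pos hr0 hr1 hx.1
  rw [f0, div_eq_iff hd.ne'] at h
  nlinarith

lemma f1_eq_half (hr0 : 0 ≤ r) (hr1 : r ≤ 1) (hx : x ∈ Set.Icc (0:ℝ) 1)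
    (h : f1 r x = 1/2) : x = 1 := by
  have hd := denom_pos hr0 hr1 hx.1
  rw [f1, div_eq_iff hd.ne'] at h
  nlinarith

lemma f0_eq_zero (hr0 : 0 ≤ r) (hr1 : r ≤ 1) (hx : x ∈ Set.Icc (0:ℝ) 1)
    (h : f0 r x = 0) : x = 0 := by
  have hd := denom_pos hr0 hr1 hx.1
  rw [f0, div_eq_zero_iff] at h
  rcases h with h | h
  · exact h
  · exact absurd h hd.ne'

lemma f1_eq_one (hr0 : 0 ≤ r) (hr1 : r ≤ 1) (hx : x ∈ Set.Icc (0:ℝ) 1)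
    (h : f1 r x = 1) : x = 0 := by
  have hd := denom_pos hr0 hr1 hx.1
  rw [f1, div_eq_one_iff_eq hd.ne'] at h
  nlinarith

lemma f0_inj (hr0 : 0 ≤ r) (hr1 : r ≤ 1) (hx : x ∈ Set.Icc (0:ℝ) 1)
    (hy : y ∈ Set.Icc (0:ℝ) 1) (h : f0 r x = f0 r y) : x = y := by
  have hdx := denom_pos hr0 hr1 hx.1
  have hdy := denom_pos hr0 hr1 hy.1
  rw [f0, f0, div_eq_div_iff hdx.ne' hdy.ne'] at h
  have h2 : (x - y) * (2 - r) = 0 := by linear_combination h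
  have : x - y = 0 := by
    rcases mul_eq_zero.1 h2 with h | h
    · exact h
    · nlinarith
  linarith

lemma f1_inj (hr0 : 0 ≤ r) (hr1 : r ≤ 1) (hx : x ∈ Set.Icc (0:ℝ) 1)
    (hy : y ∈ Set.Icc (0:ℝ) 1) (h : f1 r x = f1 r y) : x = y := by
  have hdx := denom_pos hr0 hr1 hx.1
  have hdy := denom_pos hr0 hr1 hy.1
  rw [f1, f1, div_eq_div_iff hdx.ne' hdy.ne'] at h
  have h2 : (y - x) * (2 - r) = 0 := by linear_combination h
  have : y - x = 0 := by
    rcases mul_eq_zero.1 h2 with h | h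
    · exact h
    · nlinarith
  linarith

lemma branch_inj (hr0 : 0 ≤ r) (hr1 : r ≤ 1) {b : Bool} (hx : x ∈ Set.Icc (0:ℝ) 1)
    (hy : y ∈ Set.Icc (0:ℝ) 1) (h : branch r b x = branch r b y) : x = y := by
  cases b <;> simp only [branch, if_true, if_false, Bool.false_eq_true, ite_false,
    ite_true] at h
  · exact f0_inj hr0 hr1 hx hy h
  · exact f1_inj hr0 hr1 hx hy h

lemma cylinder_cons (b : Bool) (l : List Bool) :
    cylinder r (b :: l) = branch r b '' cylinder r l := by
  rw [cylinder, cylinder, fword]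
  exact Set.image_comp _ _ _

lemma cylinder_subset (hr0 : 0 ≤ r) (hr1 : r ≤ 1) :
    ∀ l : List Bool, cylinder r l ⊆ Set.Icc (0:ℝ) 1
  | [] => by simp [cylinder, fword]
  | b :: l => by
    rw [cylinder_cons]
    rintro _ ⟨y, hy, rfl⟩
    have hy' := cylinder_subset hr0 hr1 l hy
    cases b <;> simp only [branch, Bool.false_eq_true, ite_false, ite_true]
    · have := f0_mem hr0 hr1 hy'; exact ⟨this.1, by linarith [this.2]⟩
    · have := f1_mem hr0 hr1 hy'; exact ⟨by linarith [this.1], this.2⟩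

lemma zero_mem (hr0 : 0 ≤ r) (hr1 : r ≤ 1) :
    ∀ l : List Bool, (0:ℝ) ∈ cylinder r l → l = List.replicate l.length false
  | [] => by simp
  | b :: l => by
    rw [cylinder_cons]
    rintro ⟨y, hy, h⟩
    have hy' := cylinder_subset hr0 hr1 l hy
    cases b <;> simp only [branch, Bool.false_eq_true, ite_false, ite_true] at h
    · have : y = 0 := f0_eq_zero hr0 hr1 hy' h
      subst this
      rw [List.length_cons, List.replicate_succ]
      exact congrArg _ (zero_mem hr0 hr1 l hy)
    · exfalso
      have := (f1_mem hr0 hr1 hy').1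
      rw [h] at this
      linarith

/-- canonical word containing 1 -/
def oneword : ℕ → List Bool
  | 0 => []
  | m + 1 => true :: List.replicate m false

lemma one_mem (hr0 : 0 ≤ r) (hr1 : r ≤ 1) :
    ∀ l : List Bool, (1:ℝ) ∈ cylinder r l → l = oneword l.length
  | [] => by simp [oneword]
  | b :: l => by
    rw [cylinder_cons]
    rintro ⟨y, hy, h⟩
    have hy' := cylinder_subset hr0 hr1 l hy
    cases b <;> simp only [branch, Bool.false_eq_true, ite_false, ite_true] at h
    · exfalso
      have := (f0_mem hr0 hr1 hy').2
      rw [h] at this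
      linarith
    · have : y = 0 := f1_eq_one hr0 hr1 hy' h
      subst this
      have hw := zero_mem hr0 hr1 l hy
      rw [List.length_cons]
      show _ = true :: List.replicate l.length false
      exact congrArg _ hw

lemma key (hr0 : 0 ≤ r) (hr1 : r ≤ 1) : ∀ w v : List Bool, w.length = v.length →
    (cylinder r w ∩ cylinder r v).Nonempty →
    w = v ∨ ∃ u b t, w = u ++ b :: t ∧ v = u ++ (!b) :: t
  | [], v, hl, _ => by left; simpa using (List.length_eq_zero_iff.1 hl.symm).symm
  | a :: w, [], hl, _ => by simp at hl
  | a :: w, c :: v, hl, hint => by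
    obtain ⟨p, hp1, hp2⟩ := hint
    rw [cylinder_cons] at hp1 hp2
    obtain ⟨y, hy, hpy⟩ := hp1
    obtain ⟨z, hz, hpz⟩ := hp2
    have hy' := cylinder_subset hr0 hr1 w hy
    have hz' := cylinder_subset hr0 hr1 v hz
    have hl' : w.length = v.length := by simpa using hl
    by_cases hac : a = c
    · subst hac
      have hyz : y = z := branch_inj hr0 hr1 hy' hz' (hpy.trans hpz.symm)
      subst hyz
      rcases key hr0 hr1 w v hl' ⟨y, hy, hz⟩ with h | ⟨u, b, t, h1, h2⟩
      · left; rw [h]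
      · right; exact ⟨a :: u, b, t, by simp [h1], by simp [h2]⟩
    · have halfcase : ∀ y' z' : ℝ, y' ∈ Set.Icc (0:ℝ) 1 → z' ∈ Set.Icc (0:ℝ) 1 →
          f0 r y' = f1 r z' → y' = 1 ∧ z' = 1 := by
        intro y' z' hy1 hz1 heq
        have h1 := (f0_mem hr0 hr1 hy1).2
        have h2 := (f1_mem hr0 hr1 hz1).1
        have hhalf : f0 r y' = 1/2 := le_antisymm h1 (by rw [heq]; exact h2)
        exact ⟨f0_eq_half hr0 hr1 hy1 hhalf,
          f1_eq_half hr0 hr1 hz1 (by rw [← heq, hhalf])⟩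
      have hwv : y = 1 ∧ z = 1 := by
        cases a <;> cases c <;> simp only [branch, Bool.false_eq_true, ite_false,
          ite_true] at hpy hpz
        · exact absurd rfl hac
        · exact halfcase y z hy' hz' (hpy.trans hpz.symm)
        · obtain ⟨h1, h2⟩ := halfcase z y hz' hy' (hpz.trans hpy.symm)
          exact ⟨h2, h1⟩
        · exact absurd rfl hac
      have h1w : (1:ℝ) ∈ cylinder r w := hwv.1 ▸ hy
      have h1v : (1:ℝ) ∈ cylinder r v := hwv.2 ▸ hz
      have hw := one_mem hr0 hr1 w h1w
      have hv := one_mem hr0 hr1 v h1v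
      right
      refine ⟨[], a, w, by simp, ?_⟩
      have hcb : c = !a := by cases a <;> cases c <;> first | rfl | exact absurd rfl hac
      rw [hcb, show v = w from by rw [hw, hv, hl']]
      simp

end lems

theorem stmt_6 (r : ℝ) (hr : r ∈ Set.Icc (0:ℝ) 1) (n : ℕ) (ω ν : Fin n → Bool)
    (hne : ω ≠ ν)
    (hint : (cylinder r (List.ofFn ω) ∩ cylinder r (List.ofFn ν)).Nonempty) :
    ∃! i : Fin n, ω i ≠ ν i := by
  obtain ⟨hr0, hr1⟩ := hr
  have hlen : (List.ofFn ω).length = (List.ofFn ν).length := by simp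
  rcases key hr0 hr1 _ _ hlen hint with h | ⟨u, b, t, h1, h2⟩
  · exact absurd (List.ofFn_inj.1 h) hne
  · have hn : n = u.length + (t.length + 1) := by
      have := congrArg List.length h1
      simpa using this
    have hω : ∀ (j : ℕ) (hj : j < n), ω ⟨j, hj⟩ =
        (u ++ b :: t)[j]'(by simp; omega) := by
      intro j hj
      rw [← List.getElem_ofFn (f := ω) (i := j) (by simpa using hj)]
      exact List.getElem_of_eq h1 _
    have hν : ∀ (j : ℕ) (hj : j < n), ν ⟨j, hj⟩ =
        (u ++ (!b) :: t)[j]'(by simp; omega) := by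
      intro j hj
      rw [← List.getElem_ofFn (f := ν) (i := j) (by simpa using hj)]
      exact List.getElem_of_eq h2 _
    refine ⟨⟨u.length, by omega⟩, ?_, ?_⟩
    · show ω ⟨u.length, _⟩ ≠ ν ⟨u.length, _⟩
      rw [hω u.length (by omega), hν u.length (by omega),
        List.getElem_append_right (le_refl u.length),
        List.getElem_append_right (le_refl u.length)]
      simp only [Nat.sub_self, List.getElem_cons_zero]
      cases b <;> decide
    · rintro ⟨j, hj⟩ hdiff
      by_contra hji
      apply hdiff
      rw [hω j hj, hν j hj]
      have hjne : j ≠ u.length := by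
        intro h; exact hji (Fin.mk_eq_mk.mpr h)
      rcases lt_or_gt_of_ne hjne with hlt | hgt
      · rw [List.getElem_append_left hlt, List.getElem_append_left hlt]
      · rw [List.getElem_append_right (le_of_lt hgt),
          List.getElem_append_right (le_of_lt hgt)]
        obtain ⟨k, hk⟩ : ∃ k, j - u.length = k + 1 := ⟨j - u.length - 1, by omega⟩
        simp only [hk, List.getElem_cons_succ]
end
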